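/- Assume κ < −1, set λ := √(−1−κ), and assume the restriction of g to ker(φ∘h − λ·id) is negative definite. Define φ′ := λ^{−1}·h and g′(X,Y) := −λ^{−1}·g(X,(φ∘h)(Y)) + η(X)η(Y). Then: (i) φ′∘φ′ = −id_V + η⊗ξ and φ′(ξ) = 0; (ii) g′ is a symmetric, positive-definite bilinear form (an inner product) on V; (iii) g′(φ′X,φ′Y) = g′(X,Y) − η(X)η(Y) for all X,Y; (iv) g′(X,φ′Y) = g(X,φY) for all X,Y (so the 2-form dη(X,Y) = g(X,φY) is unchanged). (This is the pointwise content of the theorem that a positive definite paracontact (κ,μ)-manifold with κ < −1 carries a canonical compatible contact Riemannian structure φ′ = (−1−κ)^{−1/2}·h̃, g′ = −dη(·,φ′·) + η⊗η.) -/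

import Mathlib

set_option maxHeartbeats 1000000


theorem stmt_13
    {V : Type*} [AddCommGroup V] [Module ℝ V]
    (ξ : V) (η : V →ₗ[ℝ] ℝ) (φ h : V →ₗ[ℝ] V) (κ : ℝ)
    (hηξ : η ξ = 1)
    (hφ2 : ∀ v, φ (φ v) = v - η v • ξ)
    (hφξ : φ ξ = 0)
    (hηφ : ∀ v, η (φ v) = 0)
    (hhξ : h ξ = 0)
    (hηh : ∀ v, η (h v) = 0)
    (hhφ : ∀ v, h (φ v) = - φ (h v))
    (hh2 : ∀ v, h (h v) = (1 + κ) • φ (φ v))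
    (g : V →ₗ[ℝ] V →ₗ[ℝ] ℝ)
    (hgsymm : ∀ X Y, g X Y = g Y X)
    (hgφ : ∀ X Y, g (φ X) (φ Y) = - g X Y + η X * η Y)
    (hgskew : ∀ X Y, g X (φ Y) = - g (φ X) Y)
    (hgh : ∀ X Y, g (h X) Y = g X (h Y))
    (hκ : κ < -1)
    (lam : ℝ) (hlam : lam = Real.sqrt (-1 - κ))
    (hneg : ∀ x, φ (h x) = lam • x → x ≠ 0 → g x x < 0)
    (φ' : V →ₗ[ℝ] V) (hφ' : φ' = lam⁻¹ • h)
    (g' : V → V → ℝ)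
    (hg' : ∀ X Y, g' X Y = -(lam⁻¹ * g X (φ (h Y))) + η X * η Y) :
    (∀ v, φ' (φ' v) = - v + η v • ξ) ∧
    φ' ξ = 0 ∧
    (∀ X Y, g' X Y = g' Y X) ∧
    (∀ X, X ≠ 0 → 0 < g' X X) ∧
    (∀ X Y, g' (φ' X) (φ' Y) = g' X Y - η X * η Y) ∧
    (∀ X Y, g' X (φ' Y) = g X (φ Y)) := by
  have hlam2 : lam * lam = -1 - κ := by
    rw [hlam]; exact Real.mul_self_sqrt (by linarith)
  have hlampos : 0 < lam := by
    rw [hlam]; exact Real.sqrt_pos.mpr (by linarith)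
  have hlamne : lam ≠ 0 := ne_of_gt hlampos
  -- φ(h(h v)) = -(lam*lam) • φ v
  have hφhh : ∀ v, φ (h (h v)) = (-(lam * lam)) • φ v := by
    intro v
    rw [hh2, map_smul, hφ2, hηφ]
    have hcoef : 1 + κ = -(lam * lam) := by linarith
    rw [hcoef]
    simp
  -- A² = lam² on ker η, where A = φ ∘ h
  have hA2 : ∀ v, φ (h (φ (h v))) = (lam * lam) • (v - η v • ξ) := by
    intro v
    rw [hhφ, map_neg, hφhh, map_smul, hφ2]
    module
  -- η ∘ A = 0
  have hηA : ∀ v, η (φ (h v)) = 0 := fun v => hηφ _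
  -- A is g-self-adjoint
  have hAsa : ∀ X Y, g X (φ (h Y)) = g (φ (h X)) Y := by
    intro X Y
    rw [hgskew, ← hgh, hhφ, map_neg, LinearMap.neg_apply, neg_neg]
  -- A ξ = 0
  have hAξ : φ (h ξ) = 0 := by rw [hhξ, map_zero]
  -- eigenvector transfer: A v = -lam v → A (φ v) = lam (φ v)
  have htrans : ∀ v, φ (h v) = (-lam) • v → φ (h (φ v)) = lam • (φ v) := by
    intro v hv
    have hhv : h v = (-lam) • φ v := by
      have h2 := congrArg φ hv
      rw [hφ2, map_smul, hηh] at h2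
      simpa using h2
    rw [hhφ, map_neg, hφ2, hηh, hhv]
    simp
  refine ⟨?_, ?_, ?_, ?_, ?_, ?_⟩
  · -- φ'² = -id + η ⊗ ξ
    intro v
    rw [hφ']
    simp only [LinearMap.smul_apply, map_smul, hh2, hφ2, smul_smul]
    have hc : lam⁻¹ * (lam⁻¹ * (1 + κ)) = -1 := by
      field_simp
      linarith
    rw [hc]
    module
  · rw [hφ']; simp [hhξ]
  · -- symmetry of g'
    intro X Y
    rw [hg', hg', hAsa, hgsymm]
    ring
  · -- positive definiteness
    intro X hX
    obtain ⟨c, hc⟩ : ∃ c, c = η X := ⟨_, rfl⟩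
    obtain ⟨w, hwdef⟩ : ∃ w, w = X - c • ξ := ⟨_, rfl⟩
    have hηw : η w = 0 := by rw [hwdef]; simp [hηξ, ← hc]
    obtain ⟨a, hadef⟩ : ∃ a, a = φ (h w) := ⟨_, rfl⟩
    have hηa : η a = 0 := by rw [hadef]; exact hηA w
    obtain ⟨wp, hwpdef⟩ : ∃ wp, wp = (2 : ℝ)⁻¹ • (w + lam⁻¹ • a) := ⟨_, rfl⟩
    obtain ⟨wm, hwmdef⟩ : ∃ wm, wm = (2 : ℝ)⁻¹ • (w - lam⁻¹ • a) := ⟨_, rfl⟩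
    have hsum : wp + wm = w := by rw [hwpdef, hwmdef]; module
    have hAa : φ (h a) = (lam * lam) • w := by
      rw [hadef, hA2, hηw]; simp
    have hAwp : φ (h wp) = lam • wp := by
      simp only [hwpdef, map_add, map_smul]
      rw [← hadef, hAa]
      match_scalars <;> field_simp
    have hAwm : φ (h wm) = (-lam) • wm := by
      simp only [hwmdef, map_sub, map_smul]
      rw [← hadef, hAa]
      match_scalars <;> field_simp <;> ring
    have hηwp : η wp = 0 := by rw [hwpdef]; simp [hηw, hηa]
    have hηwm : η wm = 0 := by rw [hwmdef]; simp [hηw, hηa]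
    -- values of g on the pieces
    have hgpp_nonpos : g wp wp ≤ 0 := by
      rcases eq_or_ne wp 0 with h0 | h0
      · simp [h0]
      · exact le_of_lt (hneg wp hAwp h0)
    have hgpp_neg : wp ≠ 0 → g wp wp < 0 := fun h0 => hneg wp hAwp h0
    have hgmm_pos : wm ≠ 0 → 0 < g wm wm := by
      intro h0
      have hφwm : φ wm ≠ 0 := by
        intro hz
        apply h0
        have e := hφ2 wm
        rw [hz, map_zero, hηwm, zero_smul, sub_zero] at e
        exact e.symm
      have hAf : φ (h (φ wm)) = lam • (φ wm) := htrans wm hAwm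
      have hlt : g (φ wm) (φ wm) < 0 := hneg _ hAf hφwm
      have e := hgφ wm wm
      rw [hηwm] at e
      nlinarith
    have hgmm_nonneg : 0 ≤ g wm wm := by
      rcases eq_or_ne wm 0 with h0 | h0
      · simp [h0]
      · exact le_of_lt (hgmm_pos h0)
    -- decomposition of X and of φ(h X)
    have hXdec : X = c • ξ + wp + wm := by
      have h' : wp + wm = X - c • ξ := by rw [hsum, hwdef]
      rw [add_assoc, h']
      abel
    have hAX : φ (h X) = lam • wp + (-lam) • wm := by
      have hXw : X = w + c • ξ := by rw [hwdef]; abel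
      rw [hXw]
      simp only [map_add, map_smul, hhξ, map_zero, smul_zero, add_zero]
      rw [← hadef, hwpdef, hwmdef]
      match_scalars <;> field_simp <;> ring
    -- g ξ wp = g ξ wm = 0
    have hξp : g ξ wp = 0 := by
      have h1 : g ξ (φ (h wp)) = 0 := by rw [hgskew, hφξ]; simp
      rw [hAwp, map_smul, smul_eq_mul] at h1
      exact (mul_eq_zero.mp h1).resolve_left hlamne
    have hξm : g ξ wm = 0 := by
      have h1 : g ξ (φ (h wm)) = 0 := by rw [hgskew, hφξ]; simp
      rw [hAwm, map_smul, smul_eq_mul] at h1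
      exact (mul_eq_zero.mp h1).resolve_left (neg_ne_zero.mpr hlamne)
    -- compute g' X X
    have hgval : g' X X = c * c - g wp wp + g wm wm := by
      rw [hg', hAX, ← hc]
      have hgX : g X = g (c • ξ + wp + wm) := by rw [← hXdec]
      rw [hgX]
      simp only [map_add, map_smul, LinearMap.add_apply, LinearMap.smul_apply,
        smul_eq_mul, hξp, hξm, mul_zero, zero_add, add_zero, neg_mul, mul_neg]
      rw [hgsymm wm wp]
      field_simp
      ring
    rw [hgval]
    -- strict positivity
    rcases eq_or_ne c 0 with hc0 | hc0
    · rcases eq_or_ne wp 0 with hp0 | hp0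
      · have hm0 : wm ≠ 0 := by
          intro hm
          apply hX
          rw [hXdec, hc0, hp0, hm]
          simp
        have := hgmm_pos hm0
        nlinarith
      · have := hgpp_neg hp0
        nlinarith
    · have : 0 < c * c := mul_self_pos.mpr hc0
      nlinarith
  · -- g'(φ'X, φ'Y) = g' X Y - ηX ηY
    intro X Y
    have key : g (h X) (φ Y) = - g X (φ (h Y)) := by
      rw [hgh, hhφ]
      simp
    rw [hg', hg', hφ']
    simp only [LinearMap.smul_apply, map_smul, map_neg, smul_smul, smul_eq_mul, hηh,
      hφhh, mul_zero, zero_mul, add_zero, neg_smul, smul_neg, neg_mul, mul_neg, neg_neg]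
    rw [key]
    field_simp
    ring
  · -- g' X (φ' Y) = g X (φ Y)
    intro X Y
    rw [hg', hφ']
    simp only [LinearMap.smul_apply, map_smul, smul_eq_mul, hφhh, hηh, mul_zero,
      add_zero, neg_smul, neg_mul, mul_neg, neg_neg]
    field_simp
    simp [map_neg, map_smul]
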